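/- arXiv:2504.17513 — 3 statements merged into one kernel-verified Lean document; each statement's English description precedes it below -/
import Mathlib

section
/- Let (W,S) be a Coxeter system of type (4,4,4) with S = {r,s,t}. Then tstr·α_s ∩ stsr·α_t ∩ (W ∖ {r_{{s,t}}·r}) ⊆ r_{{s,t}}·α_r, where r_{{s,t}} = stst is the longest element of ⟨s,t⟩. -/
open CoxeterSystem

/-- The Coxeter matrix of type `(4,4,4)`. -/
def M444 : CoxeterMatrix (Fin 3) where
  M := fun i j => if i = j then 1 else 4
  isSymm := by
    ext i j
    by_cases h : i = j <;> simp [Matrix.transpose, h, eq_comm]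
  diagonal := fun i => by simp
  off_diagonal := fun i j h => by simp [h]

variable {W : Type} [Group W]

namespace Stmt15Aux

lemma M444_diag (i : Fin 3) : M444 i i = 1 := by
  show (if i = i then 1 else 4) = 1
  simp

lemma M444_ne {i j : Fin 3} (h : i ≠ j) : M444 i j = 4 := by
  show (if i = j then 1 else 4) = 4
  simp [h]

variable (cs : CoxeterSystem M444 W)

lemma rel4 {i j : Fin 3} (h : i ≠ j) : (cs.simple i * cs.simple j) ^ 4 = 1 := by
  have := cs.simple_mul_simple_pow i j
  rwa [M444_ne h] at this


lemma layer_cancel {G : Type*} [Group G] {u v P Q : G} (h : u * P * v = u * Q * v) : P = Q :=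
  mul_left_cancel (mul_right_cancel h)

lemma shift4 {G : Type*} [Group G] {a b c : G} (X : G)
    (hc : a * (b * (a * (b * c * b) * a) * b) * a = c) :
    a * (b * (a * (b * X * b) * a) * b) * a = c ↔ X = c := by
  constructor
  · intro h
    exact layer_cancel (layer_cancel (layer_cancel (layer_cancel (h.trans hc.symm))))
  · intro h
    rw [h]
    exact hc

lemma eq_simple_of_mul (U : W) (j : Fin 3) (h : U * cs.simple j = 1) : U = cs.simple j :=
  mul_right_cancel (h.trans (cs.simple_mul_simple_self j).symm)

lemma seven {i j : Fin 3} (hij : i ≠ j) :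
    cs.simple i * (cs.simple j * (cs.simple i * cs.simple j * cs.simple i) * cs.simple j) *
      cs.simple i = cs.simple j := by
  apply eq_simple_of_mul
  have h4 := rel4 cs hij
  calc cs.simple i * (cs.simple j * (cs.simple i * cs.simple j * cs.simple i) * cs.simple j) *
      cs.simple i * cs.simple j = (cs.simple i * cs.simple j)^4 := by
        simp only [pow_succ, pow_zero, one_mul, mul_assoc]
    _ = 1 := h4

lemma hc_fix {i j : Fin 3} (hij : i ≠ j) :
    cs.simple i * (cs.simple j * (cs.simple i * (cs.simple j * cs.simple j * cs.simple j) *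
      cs.simple i) * cs.simple j) * cs.simple i = cs.simple j := by
  rw [cs.simple_mul_simple_self j, one_mul]
  exact seven cs hij

lemma zhelp (e x1 x2 x3 x4 : ZMod 2) : e + x1 + x2 + x3 + x4 + x1 + x2 + x3 + x4 = e := by
  revert e x1 x2 x3 x4
  decide

open Classical in
/-- indicator of equality, valued in `ZMod 2` -/
noncomputable def chi (x c : W) : ZMod 2 := if x = c then 1 else 0

omit [Group W] in
lemma chi_congr {x y c : W} (h : x = c ↔ y = c) : chi x c = chi y c := by
  classical
  unfold chi
  exact if_congr h rfl rfl

omit [Group W] in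
lemma chi_pos {x c : W} (h : x = c) : chi x c = 1 := by
  classical
  unfold chi
  exact if_pos h

omit [Group W] in
lemma chi_neg {x c : W} (h : ¬ x = c) : chi x c = 0 := by
  classical
  unfold chi
  exact if_neg h

lemma z2 (e x : ZMod 2) : e + x + x = e := by revert e x; decide

/-- the basic involution on `W × ZMod 2` attached to a simple reflection -/
noncomputable def nuFun (i : Fin 3) : W × ZMod 2 → W × ZMod 2 :=
  fun p => (cs.simple i * p.1 * cs.simple i, p.2 + chi p.1 (cs.simple i))

lemma nuFun_invol (i : Fin 3) : Function.Involutive (nuFun cs i) := by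
  rintro ⟨t, e⟩
  simp only [nuFun]
  refine Prod.ext ?_ ?_
  · simp [mul_assoc, cs.simple_mul_simple_cancel_left]
  · show e + chi t (cs.simple i) + chi (cs.simple i * t * cs.simple i) (cs.simple i) = e
    have hiff : cs.simple i * t * cs.simple i = cs.simple i ↔ t = cs.simple i := by
      constructor
      · intro hh
        have := congrArg (fun z => cs.simple i * z * cs.simple i) hh
        simpa [mul_assoc, cs.simple_mul_simple_cancel_left] using this
      · intro hh
        rw [hh]
        simp [mul_assoc, cs.simple_mul_simple_cancel_left]
    rw [chi_congr hiff, z2]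

noncomputable def nuPerm (i : Fin 3) : Equiv.Perm (W × ZMod 2) :=
  Function.Involutive.toPerm _ (nuFun_invol cs i)

lemma nuPerm_apply (i : Fin 3) (p : W × ZMod 2) : nuPerm cs i p = nuFun cs i p := rfl

lemma nuPerm_liftable : M444.IsLiftable (fun i => nuPerm cs (W := W) i) := by
  intro i j
  by_cases hij : i = j
  · subst hij
    rw [M444_diag, pow_one]
    refine Equiv.ext fun p => ?_
    show (nuPerm cs i (nuPerm cs i p)) = p
    exact nuFun_invol cs i p
  · rw [M444_ne hij]
    refine Equiv.ext fun p => ?_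
    obtain ⟨t, e⟩ := p
    show ((nuPerm cs i * nuPerm cs j)^4) (t, e) = (t, e)
    simp only [pow_succ, pow_zero, one_mul, Equiv.Perm.mul_apply, nuPerm_apply, nuFun]
    have hC5 := shift4 (a := cs.simple i) (b := cs.simple j) t (hc_fix cs hij)
    have hC6 := shift4 (a := cs.simple j) (b := cs.simple i)
      (cs.simple j * t * cs.simple j) (hc_fix cs (Ne.symm hij))
    have hC7 := shift4 (a := cs.simple i) (b := cs.simple j)
      (cs.simple i * (cs.simple j * t * cs.simple j) * cs.simple i) (hc_fix cs hij)
    have hC8 := shift4 (a := cs.simple j) (b := cs.simple i)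
      (cs.simple j * (cs.simple i * (cs.simple j * t * cs.simple j) * cs.simple i) * cs.simple j)
      (hc_fix cs (Ne.symm hij))
    simp only [chi_congr (c := cs.simple j) hC5, chi_congr (c := cs.simple i) hC6,
      chi_congr (c := cs.simple j) hC7, chi_congr (c := cs.simple i) hC8]
    rw [Prod.mk.injEq]
    constructor
    · trans (cs.simple i * cs.simple j)^4 * t * (cs.simple j * cs.simple i)^4
      · simp only [pow_succ, pow_zero, one_mul, mul_assoc]
      · rw [rel4 cs hij, rel4 cs (Ne.symm hij), one_mul, mul_one]
    · exact zhelp _ _ _ _ _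

noncomputable def nuHom : W →* Equiv.Perm (W × ZMod 2) :=
  cs.lift ⟨fun i => nuPerm cs i, nuPerm_liftable cs⟩

noncomputable def nu (w t : W) : ZMod 2 := ((nuHom cs w) (t, 0)).2

lemma nuHom_apply (w t : W) (e : ZMod 2) :
    nuHom cs w (t, e) = (w * t * w⁻¹, e + nu cs w t) := by
  unfold nu
  induction w using cs.simple_induction_left generalizing e with
  | one => simp
  | mul_simple_left w i ih =>
      have hs : nuHom cs (cs.simple i) = nuPerm cs i := cs.lift_apply_simple _ i
      rw [map_mul, hs, Equiv.Perm.mul_apply, Equiv.Perm.mul_apply, ih e, ih 0, nuPerm_apply,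
        nuPerm_apply]
      simp only [nuFun]
      refine Prod.ext ?_ ?_
      · show cs.simple i * (w * t * w⁻¹) * cs.simple i = (cs.simple i * w) * t * (cs.simple i * w)⁻¹
        rw [mul_inv_rev, cs.inv_simple]
        group
      · show (e + _) + _ = e + ((0 + _) + _)
        rw [zero_add, add_assoc]

lemma nu_mul (u v x : W) : nu cs (u * v) x = nu cs v x + nu cs u (v * x * v⁻¹) := by
  have h : nuHom cs (u * v) (x, 0) = nuHom cs u (nuHom cs v (x, 0)) := by
    rw [map_mul, Equiv.Perm.mul_apply]
  rw [nuHom_apply, nuHom_apply, nuHom_apply] at h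
  have := congrArg Prod.snd h
  simpa using this

lemma nu_one (x : W) : nu cs 1 x = 0 := by simp [nu]

lemma nu_simple (i : Fin 3) (x : W) : nu cs (cs.simple i) x = chi x (cs.simple i) := by
  have hs : nuHom cs (cs.simple i) = nuPerm cs i := cs.lift_apply_simple _ i
  rw [nu, hs, nuPerm_apply]
  simp [nuFun]

lemma zflip {a b : ZMod 2} (h : a + b = 0) : b = a := by revert h; revert a b; decide

lemma nu_inv_conj (u x : W) : nu cs u⁻¹ (u * x * u⁻¹) = nu cs u x := by
  apply zflip
  rw [← nu_mul cs u⁻¹ u x, inv_mul_cancel, nu_one]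

lemma nu_self {x : W} (hx : cs.IsReflection x) : nu cs x x = 1 := by
  obtain ⟨u, i, rfl⟩ := hx
  have h1 : u * cs.simple i * u⁻¹ = u * (cs.simple i * u⁻¹) := by group
  rw [h1, nu_mul, nu_mul]
  have e1 : u⁻¹ * (u * (cs.simple i * u⁻¹)) * u⁻¹⁻¹ = cs.simple i := by group
  have e2 : (cs.simple i * u⁻¹) * (u * (cs.simple i * u⁻¹)) * (cs.simple i * u⁻¹)⁻¹
      = cs.simple i := by group
  rw [e1, e2, nu_simple, chi_pos rfl]
  rw [show u * (cs.simple i * u⁻¹) = u * cs.simple i * u⁻¹ from by group, nu_inv_conj]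
  generalize nu cs u (cs.simple i) = z
  revert z
  decide

lemma nu_or_mem (ω : List (Fin 3)) (x : W) :
    nu cs (cs.wordProd ω) x = 0 ∨ x ∈ cs.rightInvSeq ω := by
  induction ω with
  | nil => left; rw [cs.wordProd_nil, nu_one]
  | cons i ω ih =>
      rw [cs.wordProd_cons, show cs.simple i * cs.wordProd ω = cs.simple i * cs.wordProd ω
        from rfl]
      rw [nu_mul, nu_simple]
      rcases ih with h0 | hmem
      · by_cases hc : cs.wordProd ω * x * (cs.wordProd ω)⁻¹ = cs.simple i
        · right
          have : x = (cs.wordProd ω)⁻¹ * cs.simple i * cs.wordProd ω := by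
            rw [← hc]; group
          rw [rightInvSeq]
          exact List.mem_cons.mpr (Or.inl this)
        · left
          rw [h0, chi_neg hc, add_zero]
      · right
        rw [rightInvSeq]
        exact List.mem_cons.mpr (Or.inr hmem)

lemma isRightInversion_of_nu {w x : W} (h : nu cs w x = 1) : cs.IsRightInversion w x := by
  obtain ⟨ω, hred, rfl⟩ := cs.exists_reduced_word' w
  rcases nu_or_mem cs ω x with h0 | hmem
  · rw [h0] at h; exact absurd h (by decide)
  · exact cs.isRightInversion_of_mem_rightInvSeq hred hmem

lemma nu_of_isRightInversion {w x : W} (hx : cs.IsReflection x)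
    (h : cs.IsRightInversion w x) : nu cs w x = 1 := by
  have hz : ∀ z : ZMod 2, z = 0 ∨ z = 1 := by decide
  rcases hz (nu cs w x) with h0 | h1
  · exfalso
    have key : nu cs (w * x) x = 1 := by
      rw [nu_mul, show x * x * x⁻¹ = x from by group, h0, add_zero, nu_self cs hx]
    have h2 := (isRightInversion_of_nu cs key).2
    rw [mul_assoc, hx.mul_self, mul_one] at h2
    exact absurd h.2 (by omega)
  · exact h1

lemma nu_left_lt {w x : W} (hx : cs.IsReflection x) :
    cs.length (x * w) < cs.length w ↔ nu cs w⁻¹ x = 1 := by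
  have hlen : cs.length (w⁻¹ * x) = cs.length (x * w) := by
    rw [← cs.length_inv, mul_inv_rev, hx.inv, inv_inv]
  constructor
  · intro h
    exact nu_of_isRightInversion cs hx ⟨hx, by rw [hlen, cs.length_inv]; exact h⟩
  · intro h
    have h2 := (isRightInversion_of_nu cs h).2
    rwa [hlen, cs.length_inv] at h2

lemma nu_left_gt {w x : W} (hx : cs.IsReflection x) :
    cs.length w < cs.length (x * w) ↔ nu cs w⁻¹ x = 0 := by
  have hne := hx.length_mul_right_ne w
  have hiff := nu_left_lt cs (w := w) hx
  have hz : ∀ z : ZMod 2, z = 0 ∨ z = 1 := by decide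
  constructor
  · intro hgt
    rcases hz (nu cs w⁻¹ x) with h0 | h1
    · exact h0
    · exact absurd (hiff.mpr h1) (by omega)
  · intro h0
    rcases Nat.lt_or_gt_of_ne hne with hlt | hgt
    · rw [hiff] at hlt
      rw [h0] at hlt
      exact absurd hlt (by decide)
    · exact hgt

lemma fin3_cases {r s t : Fin 3} (hrs : r ≠ s) (hrt : r ≠ t) (hst : s ≠ t) (i : Fin 3) :
    i = r ∨ i = s ∨ i = t := by
  revert hrs hrt hst
  revert r s t i
  decide

lemma simple_ne {i j : Fin 3} (hij : i ≠ j) :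
    cs.simple j ≠ cs.simple i ∧ cs.simple i * cs.simple j * cs.simple i ≠ cs.simple j := by
  classical
  set g : Fin 3 → DihedralGroup 4 :=
    fun k => if k = i then .sr 0 else if k = j then .sr 1 else 1 with hg
  have hval : ∀ k, g k = .sr 0 ∨ g k = .sr 1 ∨ g k = 1 := by
    intro k
    rw [hg]
    dsimp only
    split_ifs <;> simp
  have hlift : M444.IsLiftable g := by
    intro p q
    by_cases hpq : p = q
    · subst hpq
      rw [M444_diag, pow_one]
      rcases hval p with h | h | h <;> rw [h] <;> decide
    · rw [M444_ne hpq]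
      rcases hval p with h | h | h <;> rcases hval q with h' | h' | h' <;>
        rw [h, h'] <;> decide
  set φ := cs.lift ⟨g, hlift⟩ with hφ
  have hi : φ (cs.simple i) = .sr 0 := by
    rw [hφ, cs.lift_apply_simple]
    simp [hg]
  have hj : φ (cs.simple j) = .sr 1 := by
    rw [hφ, cs.lift_apply_simple]
    simp [hg, Ne.symm hij]
  constructor
  · intro h
    have h2 := congrArg φ h
    rw [hi, hj] at h2
    exact absurd h2 (by decide)
  · intro h
    have h2 := congrArg φ h
    rw [map_mul, map_mul, hi, hj] at h2
    exact absurd h2 (by decide)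

lemma eq_of_mul_self {U V : W} (hV : V * V = 1) (h : U * V = 1) : U = V := by
  calc U = U * (V * V) := by rw [hV, mul_one]
    _ = (U * V) * V := by rw [mul_assoc]
    _ = V := by rw [h, one_mul]

lemma core_aux {r s : Fin 3} (hrs : r ≠ s) (x : W)
    (h1 : cs.length (cs.simple s * (cs.simple r * (cs.simple s * x)))
        > cs.length (cs.simple r * (cs.simple s * x))) :
    cs.length x < cs.length ((cs.simple r * (cs.simple s * cs.simple r)) * x) := by
  have hbrefl := cs.isReflection_simple s
  have h1' : nu cs ((cs.simple r * (cs.simple s * x))⁻¹) (cs.simple s) = 0 :=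
    (nu_left_gt cs hbrefl).mp h1
  have hinv : (cs.simple r * (cs.simple s * x))⁻¹
      = x⁻¹ * (cs.simple s * cs.simple r) := by
    rw [mul_inv_rev, mul_inv_rev, cs.inv_simple, cs.inv_simple, mul_assoc]
  rw [hinv, nu_mul] at h1'
  have e0 : nu cs (cs.simple s * cs.simple r) (cs.simple s) = 0 := by
    rw [nu_mul, nu_simple, nu_simple, cs.inv_simple,
      chi_neg (simple_ne cs hrs).1, chi_neg (simple_ne cs hrs).2, add_zero]
  have econj : (cs.simple s * cs.simple r) * cs.simple s * (cs.simple s * cs.simple r)⁻¹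
      = cs.simple r * (cs.simple s * cs.simple r) := by
    rw [mul_inv_rev, cs.inv_simple, cs.inv_simple]
    apply eq_of_mul_self
    · simp [mul_assoc, cs.simple_mul_simple_cancel_left, cs.simple_mul_simple_self]
    · have h4 := rel4 cs (Ne.symm hrs)
      calc (cs.simple s * cs.simple r) * cs.simple s * (cs.simple r * cs.simple s) *
          (cs.simple r * (cs.simple s * cs.simple r)) = (cs.simple s * cs.simple r)^4 := by
            simp only [pow_succ, pow_zero, one_mul, mul_assoc]
        _ = 1 := h4
  rw [e0, zero_add, econj] at h1'
  have hrefl : cs.IsReflection (cs.simple r * (cs.simple s * cs.simple r)) := by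
    have := (cs.isReflection_simple s).conj (cs.simple r)
    rwa [cs.inv_simple, mul_assoc] at this
  exact (nu_left_gt cs hrefl).mpr h1'

lemma core {r s t : Fin 3} (hrs : r ≠ s) (hrt : r ≠ t) (hst : s ≠ t) (x : W)
    (h1 : cs.length (cs.simple s * (cs.simple r * (cs.simple s * x)))
        > cs.length (cs.simple r * (cs.simple s * x)))
    (h2 : cs.length (cs.simple t * (cs.simple r * (cs.simple t * x)))
        > cs.length (cs.simple r * (cs.simple t * x)))
    (h3 : x ≠ cs.simple r) :
    cs.length (cs.simple r * x) > cs.length x := by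
  have k1 := core_aux cs hrs x h1
  have k2 := core_aux cs hrt x h2
  rcases cs.length_simple_mul x r with hup | hdown
  · omega
  · exfalso
    set y := cs.simple r * x with hy
    have hxy : x = cs.simple r * y := by rw [hy, cs.simple_mul_simple_cancel_left]
    have hy1 : y ≠ 1 := by
      intro h
      rw [h, mul_one] at hxy
      exact h3 hxy
    obtain ⟨i, hi⟩ := cs.exists_leftDescent_of_ne_one hy1
    have hrw : ∀ j : Fin 3, (cs.simple r * (cs.simple j * cs.simple r)) * x
        = cs.simple r * (cs.simple j * y) := by
      intro j
      rw [hxy]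
      simp [mul_assoc, cs.simple_mul_simple_cancel_left]
    rw [hrw] at k1
    rw [hrw] at k2
    unfold CoxeterSystem.IsLeftDescent at hi
    rcases fin3_cases hrs hrt hst i with rfl | rfl | rfl
    · rw [← hxy] at hi
      omega
    · rcases cs.length_simple_mul (cs.simple i * y) r with h | h <;>
        rcases cs.length_simple_mul y i with h' | h' <;> omega
    · rcases cs.length_simple_mul (cs.simple i * y) r with h | h <;>
        rcases cs.length_simple_mul y i with h' | h' <;> omega

end Stmt15Aux

open Stmt15Aux


/-- Left translation of a subset of `W`. -/
def wmul (v : W) (A : Set W) : Set W := (v * ·) '' A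

/-- The simple root `α_u = {w ∈ W : ℓ(uw) > ℓ(w)}`. -/
def simpleRoot (cs : CoxeterSystem M444 W) (u : Fin 3) : Set W :=
  {w : W | cs.length (cs.simple u * w) > cs.length w}

/-- Lemma 2.7 of [BiRGDandTreeproducts]: in type `(4,4,4)` with `S = {r,s,t}` one has
`tstr·α_s ∩ stsr·α_t ∩ (W ∖ {r_{{s,t}}·r}) ⊆ r_{{s,t}}·α_r`, where `r_{{s,t}} = stst`. -/
theorem stmt15 (cs : CoxeterSystem M444 W)
    (r s t : Fin 3) (hrs : r ≠ s) (hrt : r ≠ t) (hst : s ≠ t) :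
    wmul (cs.simple t * cs.simple s * cs.simple t * cs.simple r) (simpleRoot cs s) ∩
      wmul (cs.simple s * cs.simple t * cs.simple s * cs.simple r) (simpleRoot cs t) ∩
      ({cs.simple s * cs.simple t * cs.simple s * cs.simple t * cs.simple r} : Set W)ᶜ ⊆
    wmul (cs.simple s * cs.simple t * cs.simple s * cs.simple t) (simpleRoot cs r) := by
  intro w hw
  obtain ⟨⟨hw1, hw2⟩, hw3⟩ := hw
  obtain ⟨y1, hy1, hwy1⟩ := hw1
  obtain ⟨y2, hy2, hwy2⟩ := hw2
  have h1 : cs.length (cs.simple s * y1) > cs.length y1 := hy1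
  have h2 : cs.length (cs.simple t * y2) > cs.length y2 := hy2
  have hwy1' : (cs.simple t * cs.simple s * cs.simple t * cs.simple r) * y1 = w := hwy1
  have hwy2' : (cs.simple s * cs.simple t * cs.simple s * cs.simple r) * y2 = w := hwy2
  set a := cs.simple r with hadef
  set b := cs.simple s with hbdef
  set c := cs.simple t with hcdef
  set x := (b * c * b * c)⁻¹ * w with hx
  have hvx : (b * c * b * c) * x = w := mul_inv_cancel_left _ _
  -- identity 1 : y1 = a * (b * x)
  have hU1 : (c * b * c * a) * (a * (b * (b * c * b * c)⁻¹)) = 1 := by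
    simp only [mul_inv_rev, hadef, hbdef, hcdef, cs.inv_simple]
    simp only [mul_assoc]
    rw [cs.simple_mul_simple_cancel_left]
    rw [← rel4 cs (Ne.symm hst)]
    simp only [pow_succ, pow_zero, one_mul, mul_assoc]
  have hy1v : y1 = a * (b * x) := by
    apply mul_left_cancel (a := c * b * c * a)
    rw [hwy1']
    calc w = 1 * w := (one_mul w).symm
      _ = ((c * b * c * a) * (a * (b * (b * c * b * c)⁻¹))) * w := by rw [hU1]
      _ = (c * b * c * a) * (a * (b * x)) := by rw [hx]; group
  -- identity 2 : y2 = a * (c * x)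
  have hU2 : (b * c * b * a) * (a * (c * (b * c * b * c)⁻¹)) = 1 := by
    simp only [mul_inv_rev, hadef, hbdef, hcdef, cs.inv_simple]
    simp only [mul_assoc]
    simp only [cs.simple_mul_simple_cancel_left, cs.simple_mul_simple_self]
  have hy2v : y2 = a * (c * x) := by
    apply mul_left_cancel (a := b * c * b * a)
    rw [hwy2']
    calc w = 1 * w := (one_mul w).symm
      _ = ((b * c * b * a) * (a * (c * (b * c * b * c)⁻¹))) * w := by rw [hU2]
      _ = (b * c * b * a) * (a * (c * x)) := by rw [hx]; group
  rw [hy1v] at h1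
  rw [hy2v] at h2
  have hxa : x ≠ a := by
    intro h
    apply hw3
    show w = b * c * b * c * a
    rw [← hvx, h]
  have hmain := core cs hrs hrt hst x h1 h2 hxa
  exact ⟨x, hmain, hvx⟩
end

section
/- Let (W,S) be a Coxeter system of type (4,4,4) with S = {r,s,t} and let w ∈ W with ℓ(w·rstr) = ℓ(w) + 4 (so that (w, wr, wrs, wrst, wrstr) is a minimal gallery of type (r,s,t,r)). Let β_1 = w·α_r, β_2 = wr·α_s, β_3 = wrs·α_t, β_4 = wrst·α_r be the roots crossed by this gallery. Then β_1 ⊊ β_3 and β_1 ⊊ β_4. -/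
open CoxeterSystem

variable {W : Type} [Group W]

namespace Stmt16Aux

open Matrix

instance : Zsqrtd.Nonsquare 2 :=
  ⟨fun n => by match n with | 0 => decide | 1 => decide | (n+2) => intro h; nlinarith⟩

abbrev R2 : Type := Zsqrtd ((2:ℕ):ℤ)

def rt : R2 := ⟨0,1⟩

abbrev V : Type := Fin 3 → R2

abbrev Mat : Type := Matrix (Fin 3) (Fin 3) R2

def sig : Fin 3 → Mat :=
  fun i k l => if k = i then (if l = i then -1 else rt) else (if k = l then 1 else 0)

def av (i : Fin 3) : V := fun k => if k = i then 1 else 0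

def Pos (v : V) : Prop := ∀ k, 0 ≤ v k

instance : DecidablePred Pos := fun v => inferInstanceAs (Decidable (∀ k, 0 ≤ v k))

def Gm : Mat := fun k l => if k = l then 2 else -rt

def Bf (x y : V) : R2 := x ⬝ᵥ (Gm.mulVec y)

theorem hlift : M444.IsLiftable sig := by unfold CoxeterMatrix.IsLiftable; decide

theorem sigG : ∀ i, (sig i)ᵀ * Gm * sig i = Gm := by decide

theorem pos_av : ∀ i, Pos (av i) := by decide

theorem Bf_av : ∀ i, Bf (av i) (av i) = 2 := by decide

theorem sig_av_self : ∀ i, sig i *ᵥ av i = -(av i) := by decide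

theorem D_b : ∀ i j, i ≠ j → sig j *ᵥ av i = av i + rt • av j := by decide

theorem D_ab : ∀ i j, i ≠ j → (sig i * sig j) *ᵥ av i = av i + rt • av j := by decide

theorem D_bab : ∀ i j, i ≠ j → (sig j * sig i * sig j) *ᵥ av i = av i := by decide

theorem D_ba_ne : ∀ i j, i ≠ j → sig j * sig i ≠ 1 := by decide

theorem D_aba_ne1 : ∀ i j, i ≠ j → sig i * sig j * sig i ≠ 1 := by decide

theorem D_aba_nes : ∀ i j k, i ≠ j → sig i * sig j * sig i ≠ sig k := by decide

theorem D_abab_ne1 : ∀ i j, i ≠ j → sig i * sig j * sig i * sig j ≠ 1 := by decide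

theorem D_abab_nes : ∀ i j k, i ≠ j → sig i * sig j * sig i * sig j ≠ sig k := by decide

theorem D_abab_ne2 : ∀ i j k l, i ≠ j → sig i * sig j * sig i * sig j ≠ sig k * sig l := by decide

theorem rt_nonneg : (0:R2) ≤ rt := by decide

theorem two_ne_zero' : (2:R2) ≠ 0 := by decide

def c1 : R2 := ⟨2,1⟩
def c2 : R2 := ⟨2,2⟩

theorem c1_ge : (2:R2) ≤ c1 := by decide
theorem c2_ge : (2:R2) ≤ c2 := by decide

theorem P1a : ∀ r s t : Fin 3, r ≠ s → r ≠ t → s ≠ t →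
    (sig r * sig s * (sig t * sig s)) *ᵥ av r
      = (c1*c1 - 1) • av r + c1 • (sig s *ᵥ av t) := by decide

theorem P1b : ∀ r s t : Fin 3, r ≠ s → r ≠ t → s ≠ t →
    (sig r * sig s * (sig t * sig s)) *ᵥ (sig s *ᵥ av t)
      = -(c1 • av r) - (sig s *ᵥ av t) := by decide

theorem P1pos : ∀ s t : Fin 3, s ≠ t → Pos (sig s *ᵥ av t) := by decide

theorem P1coord : ∀ s t : Fin 3, s ≠ t → 0 < (sig s *ᵥ av t) t := by decide

theorem P2a : ∀ r s t : Fin 3, r ≠ s → r ≠ t → s ≠ t →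
    (sig r * sig s * (sig t * sig r) * (sig t * sig s)) *ᵥ av r
      = (c2*c2 - 1) • av r + c2 • ((sig s * sig t) *ᵥ av r) := by decide

theorem P2b : ∀ r s t : Fin 3, r ≠ s → r ≠ t → s ≠ t →
    (sig r * sig s * (sig t * sig r) * (sig t * sig s)) *ᵥ ((sig s * sig t) *ᵥ av r)
      = -(c2 • av r) - ((sig s * sig t) *ᵥ av r) := by decide

theorem P2pos : ∀ r s t : Fin 3, r ≠ s → r ≠ t → s ≠ t →
    Pos ((sig s * sig t) *ᵥ av r) := by decide

theorem P2coord : ∀ r s t : Fin 3, r ≠ s → r ≠ t → s ≠ t →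
    0 < ((sig s * sig t) *ᵥ av r) t := by decide

theorem N1 : ∀ r s : Fin 3, r ≠ s → ¬ Pos ((sig s * sig r) *ᵥ av r) := by decide

theorem N2 : ∀ r s t : Fin 3, r ≠ s → r ≠ t → s ≠ t →
    ¬ Pos ((sig t * (sig s * sig r)) *ᵥ av r) := by decide

theorem av_apply_ne : ∀ r t : Fin 3, r ≠ t → av r t = 0 := by decide

theorem sig_offdiag : ∀ (i k : Fin 3), k ≠ i → ∀ γ : V, (sig i *ᵥ γ) k = γ k := by
  intro i k hk γ
  fin_cases i <;> fin_cases k <;>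
    simp_all [sig, Matrix.mulVec, dotProduct, Fin.sum_univ_three, rt]

theorem Bf_diag : ∀ (i : Fin 3) (γ : V), (∀ m, m ≠ i → γ m = 0) →
    Bf γ γ = 2 * (γ i * γ i) := by
  intro i γ h
  fin_cases i
  · have h1 := h 1 (by decide); have h2 := h 2 (by decide)
    simp [Bf, Gm, Matrix.mulVec, dotProduct, Fin.sum_univ_three, h1, h2]; ring
  · have h1 := h 0 (by decide); have h2 := h 2 (by decide)
    simp [Bf, Gm, Matrix.mulVec, dotProduct, Fin.sum_univ_three, h1, h2]; ring
  · have h1 := h 0 (by decide); have h2 := h 1 (by decide)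
    simp [Bf, Gm, Matrix.mulVec, dotProduct, Fin.sum_univ_three, h1, h2]; ring


section Main

variable {W : Type} [Group W] (cs : CoxeterSystem M444 W)

/-- The geometric representation. -/
def rho : W →* Mat := cs.lift ⟨sig, hlift⟩

theorem rho_simple (i : Fin 3) : rho cs (cs.simple i) = sig i :=
  cs.lift_apply_simple hlift i

theorem rho_G (w : W) : (rho cs w)ᵀ * Gm * rho cs w = Gm := by
  refine cs.simple_induction (p := fun w => (rho cs w)ᵀ * Gm * rho cs w = Gm) w
    (fun i => ?_) ?_ (fun w w' hw hw' => ?_)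
  · show (rho cs (cs.simple i))ᵀ * Gm * rho cs (cs.simple i) = Gm
    rw [rho_simple]; exact sigG i
  · show (rho cs (1:W))ᵀ * Gm * rho cs 1 = Gm
    simp
  · show (rho cs (w * w'))ᵀ * Gm * rho cs (w * w') = Gm
    replace hw : (rho cs w)ᵀ * Gm * rho cs w = Gm := hw
    replace hw' : (rho cs w')ᵀ * Gm * rho cs w' = Gm := hw'
    rw [_root_.map_mul, Matrix.transpose_mul]
    have e : (rho cs w')ᵀ * (rho cs w)ᵀ * Gm * (rho cs w * rho cs w')
        = (rho cs w')ᵀ * (((rho cs w)ᵀ * Gm * rho cs w) * rho cs w') := by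
      simp only [mul_assoc]
    rw [e, hw, ← mul_assoc, hw']

theorem Bf_rho (w : W) (x y : V) : Bf (rho cs w *ᵥ x) (rho cs w *ᵥ y) = Bf x y := by
  have h : (rho cs w)ᵀ * Gm * rho cs w = Gm := rho_G cs w
  unfold Bf
  rw [Matrix.mulVec_mulVec, Matrix.dotProduct_mulVec, ← Matrix.vecMul_transpose,
    Matrix.vecMul_vecMul, ← mul_assoc, h, ← Matrix.dotProduct_mulVec]

/-- The roots of the representation. -/
def IsRoot (γ : V) : Prop := ∃ (u : W) (k : Fin 3), γ = rho cs u *ᵥ av k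

theorem isRoot_mulVec {γ : V} (h : IsRoot cs γ) (w : W) : IsRoot cs (rho cs w *ᵥ γ) := by
  obtain ⟨u, k, rfl⟩ := h
  exact ⟨w * u, k, by rw [_root_.map_mul, Matrix.mulVec_mulVec]⟩

theorem root_Bf {γ : V} (h : IsRoot cs γ) : Bf γ γ = 2 := by
  obtain ⟨u, k, rfl⟩ := h
  rw [Bf_rho]
  exact Bf_av k

theorem root_ne_zero {γ : V} (h : IsRoot cs γ) : γ ≠ 0 := by
  intro h0
  have h2 := root_Bf cs h
  rw [h0] at h2
  have hz : Bf (0:V) 0 = 0 := by simp [Bf]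
  rw [hz] at h2
  exact two_ne_zero' h2.symm

theorem pos_add {x y : V} (hx : Pos x) (hy : Pos y) : Pos (x + y) :=
  fun k => add_nonneg (hx k) (hy k)

theorem pos_smul {c : R2} {x : V} (hc : 0 ≤ c) (hx : Pos x) : Pos (c • x) :=
  fun k => by simpa using mul_nonneg hc (hx k)

theorem braid (i j : Fin 3) (hij : i ≠ j) :
    cs.simple i * cs.simple j * cs.simple i * cs.simple j
      = cs.simple j * cs.simple i * cs.simple j * cs.simple i := by
  have h4 : (cs.simple i * cs.simple j) ^ 4 = 1 := by
    have h := cs.simple_mul_simple_pow i j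
    rwa [show M444.M i j = 4 by simp [M444, hij]] at h
  have h2 : ((cs.simple i * cs.simple j) ^ 2) * ((cs.simple i * cs.simple j) ^ 2) = 1 := by
    rw [← pow_add]; exact h4
  have h2' : (cs.simple i * cs.simple j) ^ 2 = ((cs.simple i * cs.simple j) ^ 2)⁻¹ :=
    eq_inv_of_mul_eq_one_left h2
  calc cs.simple i * cs.simple j * cs.simple i * cs.simple j
      = (cs.simple i * cs.simple j) ^ 2 := by rw [pow_two]; simp [mul_assoc]
    _ = ((cs.simple i * cs.simple j) ^ 2)⁻¹ := h2'
    _ = cs.simple j * cs.simple i * cs.simple j * cs.simple i := by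
        rw [pow_two, _root_.mul_inv_rev, _root_.mul_inv_rev, cs.inv_simple, cs.inv_simple]
        simp [mul_assoc]

set_option maxHeartbeats 1000000 in
theorem dihedral_mem (i j : Fin 3) (hij : i ≠ j) (ω : List (Fin 3))
    (hl : ∀ l ∈ ω, l = i ∨ l = j) :
    cs.wordProd ω = 1 ∨ cs.wordProd ω = cs.simple i ∨ cs.wordProd ω = cs.simple j ∨
    cs.wordProd ω = cs.simple i * cs.simple j ∨
    cs.wordProd ω = cs.simple j * cs.simple i ∨
    cs.wordProd ω = cs.simple i * cs.simple j * cs.simple i ∨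
    cs.wordProd ω = cs.simple j * cs.simple i * cs.simple j ∨
    cs.wordProd ω = cs.simple i * cs.simple j * cs.simple i * cs.simple j := by
  induction ω with
  | nil => simp
  | cons l ω ih =>
    have hl' : ∀ x ∈ ω, x = i ∨ x = j := fun x hx => hl x (List.mem_cons_of_mem _ hx)
    have hbraid := braid cs i j hij
    rw [cs.wordProd_cons]
    rcases hl l (List.mem_cons_self) with rfl | rfl <;>
      rcases ih hl' with h | h | h | h | h | h | h | h <;> rw [h] <;>
      simp only [← mul_assoc, cs.simple_mul_simple_self, one_mul, mul_one,
        cs.simple_mul_simple_cancel_left, cs.simple_mul_simple_cancel_right] <;>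
      first
        | tauto
        | (rw [← hbraid]
           simp only [cs.simple_mul_simple_cancel_right]
           tauto)

theorem length_one_simple {x : W} (h : cs.length x = 1) : ∃ k, x = cs.simple k := by
  obtain ⟨ω, hωl, hωp⟩ := cs.exists_reduced_word x
  replace hωl : ω.length = 1 := by rw [← hωl.eq, ← hωp, h]
  obtain ⟨k, rfl⟩ := List.length_eq_one_iff.mp hωl
  exact ⟨k, by rw [hωp, cs.wordProd_singleton]⟩

theorem length_two_simple {x : W} (h : cs.length x = 2) :
    ∃ k l, x = cs.simple k * cs.simple l := by
  obtain ⟨ω, hωl, hωp⟩ := cs.exists_reduced_word x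
  replace hωl : ω.length = 2 := by rw [← hωl.eq, ← hωp, h]
  obtain ⟨k, l, rfl⟩ := List.length_eq_two.mp hωl
  refine ⟨k, l, ?_⟩
  rw [hωp, cs.wordProd_cons, cs.wordProd_singleton]

set_option maxHeartbeats 1000000 in
theorem pos_T1' : ∀ n : ℕ, ∀ w : W, cs.length w ≤ n → ∀ i : Fin 3,
    cs.length w < cs.length (w * cs.simple i) → Pos (rho cs w *ᵥ av i) := by
  intro n
  induction n with
  | zero =>
    intro w hw i _
    have hw1 : w = 1 := cs.length_eq_zero_iff.mp (Nat.le_zero.mp hw)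
    subst hw1
    simpa [Matrix.one_mulVec] using pos_av i
  | succ n IH =>
    intro w hw i hi
    rcases eq_or_ne w 1 with rfl | hw1
    · simpa [Matrix.one_mulVec] using pos_av i
    obtain ⟨j, hj⟩ := cs.exists_rightDescent_of_ne_one hw1
    have hji : j ≠ i := by
      rintro rfl
      unfold CoxeterSystem.IsRightDescent at hj
      omega
    classical
    set P : ℕ → Prop := fun m => ∃ v : W, ∃ ω : List (Fin 3),
      (∀ l ∈ ω, l = i ∨ l = j) ∧ ω.length = m ∧ w = v * cs.wordProd ω ∧
      cs.length w = cs.length v + m with hPdef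
    have hP1 : P 1 := by
      refine ⟨w * cs.simple j, [j], by simp, rfl, ?_, ?_⟩
      · rw [cs.wordProd_singleton]; simp
      · have := cs.isRightDescent_iff.mp hj; omega
    have hPb : ∀ m, P m → m ≤ cs.length w := by
      rintro m ⟨v, ω, -, -, -, h4⟩; omega
    set m := Nat.findGreatest P (cs.length w) with hm
    have hPm : P m := Nat.findGreatest_spec (hPb 1 hP1) hP1
    have hmax : ∀ m', P m' → m' ≤ m := by
      intro m' hm'
      by_contra hgt
      push_neg at hgt
      exact Nat.findGreatest_is_greatest hgt (hPb m' hm') hm'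
    obtain ⟨v, ω, hlet, hlen, hvw, hadd⟩ := hPm
    have hm1 : 1 ≤ m := hmax 1 hP1
    have hωlen : cs.length (cs.wordProd ω) = m := by
      have h1 : cs.length (cs.wordProd ω) ≤ m := hlen ▸ cs.length_wordProd_le ω
      have h2 : cs.length w ≤ cs.length v + cs.length (cs.wordProd ω) :=
        hvw ▸ cs.length_mul_le v (cs.wordProd ω)
      omega
    have hvdesc : ∀ k : Fin 3, (k = i ∨ k = j) →
        cs.length v < cs.length (v * cs.simple k) := by
      intro k hk
      rcases (cs.length_mul_simple_ne v k).lt_or_gt with hlt | hgt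
      · exfalso
        have hP' : P (m + 1) := by
          refine ⟨v * cs.simple k, k :: ω, ?_, by simp [hlen], ?_, ?_⟩
          · intro l hl
            rcases List.mem_cons.mp hl with rfl | hl
            · exact hk
            · exact hlet l hl
          · rw [cs.wordProd_cons, hvw]
            simp [mul_assoc]
          · have : cs.length (v * cs.simple k) + 1 = cs.length v :=
              cs.isRightDescent_iff.mp hlt
            omega
        have := hmax (m + 1) hP'
        omega
      · exact hgt
    have hu : cs.length (cs.wordProd ω) < cs.length (cs.wordProd ω * cs.simple i) := by
      rcases (cs.length_mul_simple_ne (cs.wordProd ω) i).lt_or_gt with hlt | hgt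
      · exfalso
        have h1 : cs.length (w * cs.simple i)
            ≤ cs.length v + cs.length (cs.wordProd ω * cs.simple i) := by
          have h2 := cs.length_mul_le v (cs.wordProd ω * cs.simple i)
          rw [hvw, mul_assoc]
          exact h2
        omega
      · exact hgt
    have hvlen : cs.length v ≤ n := by omega
    have hIHi : Pos (rho cs v *ᵥ av i) := IH v hvlen i (hvdesc i (Or.inl rfl))
    have hIHj : Pos (rho cs v *ᵥ av j) := IH v hvlen j (hvdesc j (Or.inr rfl))
    have hij : i ≠ j := hji.symm
    have expand : ∀ x : Mat, Pos (rho cs v *ᵥ (x *ᵥ av i)) →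
        Pos (rho cs (v * cs.wordProd ω) *ᵥ av i) → True := fun _ _ _ => trivial
    rw [hvw, _root_.map_mul]
    rcases dihedral_mem cs i j hij ω hlet with h | h | h | h | h | h | h | h
    -- u = 1
    · rw [h, _root_.map_one, mul_one]
      exact hIHi
    -- u = s i : impossible
    · exfalso
      rw [h] at hu
      simp [cs.length_simple] at hu
    -- u = s j
    · rw [h, rho_simple, ← Matrix.mulVec_mulVec, D_b i j hij,
        Matrix.mulVec_add, Matrix.mulVec_smul]
      exact pos_add (hIHi) (pos_smul rt_nonneg hIHj)
    -- u = s i * s j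
    · rw [h]
      simp only [_root_.map_mul, rho_simple]
      rw [← Matrix.mulVec_mulVec, D_ab i j hij, Matrix.mulVec_add, Matrix.mulVec_smul]
      exact pos_add (hIHi) (pos_smul rt_nonneg hIHj)
    -- u = s j * s i : impossible
    · exfalso
      rw [h] at hu
      have e : cs.simple j * cs.simple i * cs.simple i = cs.simple j := by simp [mul_assoc]
      rw [e, cs.length_simple] at hu
      have h0 : cs.length (cs.simple j * cs.simple i) = 0 := by omega
      have h1 : cs.simple j * cs.simple i = 1 := cs.length_eq_zero_iff.mp h0
      have h2 := congrArg (rho cs) h1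
      simp only [_root_.map_mul, _root_.map_one, rho_simple] at h2
      exact D_ba_ne i j hij h2
    -- u = s i * s j * s i : impossible
    · exfalso
      rw [h] at hu
      have e : cs.simple i * cs.simple j * cs.simple i * cs.simple i
          = cs.simple i * cs.simple j := by simp [mul_assoc]
      rw [e] at hu
      have hab : cs.length (cs.simple i * cs.simple j) ≤ 2 := by
        have := cs.length_mul_le (cs.simple i) (cs.simple j)
        simpa [cs.length_simple] using this
      have : cs.length (cs.simple i * cs.simple j * cs.simple i) = 0 ∨
          cs.length (cs.simple i * cs.simple j * cs.simple i) = 1 := by omega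
      rcases this with h0 | h0
      · have h1 := cs.length_eq_zero_iff.mp h0
        have h2 := congrArg (rho cs) h1
        simp only [_root_.map_mul, _root_.map_one, rho_simple] at h2
        exact D_aba_ne1 i j hij h2
      · obtain ⟨k, h1⟩ := length_one_simple cs h0
        have h2 := congrArg (rho cs) h1
        simp only [_root_.map_mul, _root_.map_one, rho_simple] at h2
        exact D_aba_nes i j k hij h2
    -- u = s j * s i * s j
    · rw [h]
      simp only [_root_.map_mul, rho_simple]
      rw [← Matrix.mulVec_mulVec, D_bab i j hij]
      exact hIHi
    -- u = s i * s j * s i * s j : impossible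
    · exfalso
      rw [h] at hu
      have e : cs.simple i * cs.simple j * cs.simple i * cs.simple j * cs.simple i
          = cs.simple j * cs.simple i * cs.simple j := by
        rw [braid cs i j hij]
        simp [mul_assoc]
      rw [e] at hu
      have hab : cs.length (cs.simple j * cs.simple i * cs.simple j) ≤ 3 := by
        have h2 := cs.length_mul_le (cs.simple j * cs.simple i) (cs.simple j)
        have h3 := cs.length_mul_le (cs.simple j) (cs.simple i)
        simp only [cs.length_simple] at h2 h3
        omega
      have : cs.length (cs.simple i * cs.simple j * cs.simple i * cs.simple j) = 0 ∨
          cs.length (cs.simple i * cs.simple j * cs.simple i * cs.simple j) = 1 ∨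
          cs.length (cs.simple i * cs.simple j * cs.simple i * cs.simple j) = 2 := by omega
      rcases this with h0 | h0 | h0
      · have h1 := cs.length_eq_zero_iff.mp h0
        have h2 := congrArg (rho cs) h1
        simp only [_root_.map_mul, _root_.map_one, rho_simple] at h2
        exact D_abab_ne1 i j hij h2
      · obtain ⟨k, h1⟩ := length_one_simple cs h0
        have h2 := congrArg (rho cs) h1
        simp only [_root_.map_mul, _root_.map_one, rho_simple] at h2
        exact D_abab_nes i j k hij h2
      · obtain ⟨k, l, h1⟩ := length_two_simple cs h0
        have h2 := congrArg (rho cs) h1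
        simp only [_root_.map_mul, _root_.map_one, rho_simple] at h2
        exact D_abab_ne2 i j k l hij h2

theorem pos_T1 (w : W) (i : Fin 3) (h : cs.length w < cs.length (w * cs.simple i)) :
    Pos (rho cs w *ᵥ av i) :=
  pos_T1' cs (cs.length w) w le_rfl i h

theorem image_sign (v : W) (k : Fin 3) :
    Pos (rho cs v *ᵥ av k) ∨ Pos (-(rho cs v *ᵥ av k)) := by
  rcases (cs.length_mul_simple_ne v k).lt_or_gt with hlt | hgt
  · right
    have h1 : cs.length (v * cs.simple k) < cs.length (v * cs.simple k * cs.simple k) := by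
      simpa using hlt
    have h2 := pos_T1 cs (v * cs.simple k) k h1
    have h3 : rho cs v *ᵥ av k = -(rho cs (v * cs.simple k) *ᵥ av k) := by
      conv_lhs => rw [show v = v * cs.simple k * cs.simple k by simp]
      rw [_root_.map_mul, rho_simple, ← Matrix.mulVec_mulVec, sig_av_self, Matrix.mulVec_neg]
    rw [h3, neg_neg]
    exact h2
  · left
    exact pos_T1 cs v k hgt

theorem root_sign {γ : V} (h : IsRoot cs γ) : Pos γ ∨ Pos (-γ) := by
  obtain ⟨u, k, rfl⟩ := h
  exact image_sign cs u k

theorem key_53 {γ : V} (hr : IsRoot cs γ) (i : Fin 3) (hp : Pos γ)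
    (hn : ¬ Pos (sig i *ᵥ γ)) : γ = av i := by
  have hroot' : IsRoot cs (sig i *ᵥ γ) := by
    have h := isRoot_mulVec cs hr (cs.simple i)
    rwa [rho_simple] at h
  have hneg : Pos (-(sig i *ᵥ γ)) := (root_sign cs hroot').resolve_left hn
  have hzero : ∀ m, m ≠ i → γ m = 0 := by
    intro m hm
    have h1 : 0 ≤ γ m := hp m
    have h2 : γ m ≤ 0 := by
      have h3 := hneg m
      rw [Pi.neg_apply, sig_offdiag i m hm γ] at h3
      linarith
    exact le_antisymm h2 h1
  have hB : Bf γ γ = 2 := root_Bf cs hr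
  have hB2 : 2 * (γ i * γ i) = 2 * 1 := by
    rw [← Bf_diag i γ hzero, hB, mul_one]
  have hc : γ i * γ i = 1 := mul_left_cancel₀ two_ne_zero' hB2
  have h1 : (γ i - 1) * (γ i + 1) = 0 := by linear_combination hc
  rcases mul_eq_zero.mp h1 with h | h
  · have hgi : γ i = 1 := by linarith [sub_eq_zero.mp h]
    funext m
    by_cases hm : m = i
    · subst hm; simp [av, hgi]
    · simp [av, hm, hzero m hm]
  · exfalso
    have hgi : γ i = -1 := by linarith [eq_neg_of_add_eq_zero_left h]
    have h4 := hp i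
    rw [hgi] at h4
    exact (by decide : ¬ ((0:R2) ≤ -1)) h4

/-- The set of positive roots sent negative by `w`. -/
def Nset (w : W) : Set V := {γ | IsRoot cs γ ∧ Pos γ ∧ ¬ Pos (rho cs w *ᵥ γ)}

theorem Nset_finite' : ∀ n : ℕ, ∀ w : W, cs.length w ≤ n → (Nset cs w).Finite := by
  intro n
  induction n with
  | zero =>
    intro w hw
    have hw1 : w = 1 := cs.length_eq_zero_iff.mp (Nat.le_zero.mp hw)
    subst hw1
    convert Set.finite_empty
    ext γ
    simp only [Nset, Set.mem_setOf_eq, Set.mem_empty_iff_false, iff_false]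
    rintro ⟨-, hpos, hneg⟩
    rw [_root_.map_one, Matrix.one_mulVec] at hneg
    exact hneg hpos
  | succ n IH =>
    intro w hw
    rcases eq_or_ne w 1 with rfl | hw1
    · convert Set.finite_empty
      ext γ
      simp only [Nset, Set.mem_setOf_eq, Set.mem_empty_iff_false, iff_false]
      rintro ⟨-, hpos, hneg⟩
      rw [_root_.map_one, Matrix.one_mulVec] at hneg
      exact hneg hpos
    obtain ⟨i, hi⟩ := cs.exists_leftDescent_of_ne_one hw1
    set w' := cs.simple i * w with hw'def
    have hlen' : cs.length w' ≤ n := by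
      have h1 := cs.isLeftDescent_iff.mp hi
      have h2 : cs.length w' = cs.length (cs.simple i * w) := rfl
      omega
    have hsub : Nset cs w ⊆ insert (rho cs w'⁻¹ *ᵥ av i) (Nset cs w') := by
      rintro γ ⟨hroot, hpos, hneg⟩
      by_cases h' : Pos (rho cs w' *ᵥ γ)
      · have hni : ¬ Pos (sig i *ᵥ (rho cs w' *ᵥ γ)) := by
          have hww' : w = cs.simple i * w' := by rw [hw'def]; simp
          rw [hww', _root_.map_mul, rho_simple, ← Matrix.mulVec_mulVec] at hneg
          exact hneg
        have hkey := key_53 cs (isRoot_mulVec cs hroot w') i h' hni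
        left
        rw [← hkey, Matrix.mulVec_mulVec, ← _root_.map_mul, inv_mul_cancel,
          _root_.map_one, Matrix.one_mulVec]
      · right
        exact ⟨hroot, hpos, h'⟩
    exact Set.Finite.subset ((IH w' hlen').insert _) hsub

theorem Nset_finite (w : W) : (Nset cs w).Finite :=
  Nset_finite' cs (cs.length w) w le_rfl

end Main

/-- Coefficient sequences for the dihedral orbit. -/
def seqXY (c : R2) : ℕ → R2 × R2
  | 0 => (1, 0)
  | n+1 => ((c*c-1) * (seqXY c n).1 - c * (seqXY c n).2, c * (seqXY c n).1 - (seqXY c n).2)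

theorem seq_inv {c : R2} (hc : (2:R2) ≤ c) :
    ∀ n, 0 ≤ (seqXY c n).2 ∧ (seqXY c n).2 < (seqXY c n).1 := by
  intro n
  induction n with
  | zero => exact ⟨le_refl 0, by norm_num [seqXY]⟩
  | succ n ih =>
    obtain ⟨h1, h2⟩ := ih
    set x := (seqXY c n).1
    set y := (seqXY c n).2
    have hx : (0:R2) < x := lt_of_le_of_lt h1 h2
    have hc0 : (0:R2) ≤ c := le_trans (by norm_num) hc
    constructor
    · show (0:R2) ≤ c * x - y
      nlinarith [mul_nonneg (sub_nonneg.mpr hc) hx.le]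
    · show c * x - y < (c*c-1) * x - c * y
      nlinarith [mul_pos (show (0:R2) < c - 1 by linarith) (sub_pos.mpr h2),
        mul_nonneg (mul_nonneg hc0 (sub_nonneg.mpr hc)) hx.le]

theorem seq_mono {c : R2} (hc : (2:R2) ≤ c) (n : ℕ) :
    (seqXY c n).2 < (seqXY c (n+1)).2 := by
  obtain ⟨h1, h2⟩ := seq_inv hc n
  set x := (seqXY c n).1
  set y := (seqXY c n).2
  show y < c * x - y
  nlinarith [mul_nonneg (sub_nonneg.mpr hc) (lt_of_le_of_lt h1 h2).le]

section Main2

variable {W : Type} [Group W] (cs : CoxeterSystem M444 W)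

theorem pairLemma (k : Fin 3) (q : W) (β : V) (c : R2)
    (hroot : IsRoot cs β) (hpos : Pos β) (hc : (2:R2) ≤ c)
    (hga : rho cs q *ᵥ av k = (c*c-1) • av k + c • β)
    (hgb : rho cs q *ᵥ β = -(c • av k) - β)
    (m0 : Fin 3) (hm0 : av k m0 = 0) (hm1 : 0 < β m0) :
    ∀ w : W, Pos (rho cs w *ᵥ av k) ∨ Pos (rho cs w *ᵥ β) := by
  intro w
  by_contra hcon
  push_neg at hcon
  obtain ⟨hna, hnb⟩ := hcon
  have hnegA : Pos (-(rho cs w *ᵥ av k)) := (image_sign cs w k).resolve_left hna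
  have hnegB : Pos (-(rho cs w *ᵥ β)) := by
    have hr : IsRoot cs (rho cs w *ᵥ β) := isRoot_mulVec cs hroot w
    exact (root_sign cs hr).resolve_left hnb
  set f : ℕ → V := fun n => (seqXY c n).1 • av k + (seqXY c n).2 • β with hf
  have hfn : ∀ n, f n = rho cs (q^n) *ᵥ av k := by
    intro n
    induction n with
    | zero =>
      show (1:R2) • av k + (0:R2) • β = rho cs (q^0) *ᵥ av k
      rw [pow_zero, _root_.map_one, Matrix.one_mulVec, one_smul, zero_smul, add_zero]
    | succ n ih =>
      rw [pow_succ', _root_.map_mul, ← Matrix.mulVec_mulVec, ← ih]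
      show (seqXY c (n+1)).1 • av k + (seqXY c (n+1)).2 • β
        = rho cs q *ᵥ ((seqXY c n).1 • av k + (seqXY c n).2 • β)
      rw [Matrix.mulVec_add, Matrix.mulVec_smul, Matrix.mulVec_smul, hga, hgb]
      funext m
      simp only [seqXY, Pi.add_apply, Pi.smul_apply, Pi.sub_apply, Pi.neg_apply,
        smul_eq_mul]
      ring
  have hmem : ∀ n, f n ∈ Nset cs w := by
    intro n
    obtain ⟨h1, h2⟩ := seq_inv hc n
    have hx0 : (0:R2) ≤ (seqXY c n).1 := le_of_lt (lt_of_le_of_lt h1 h2)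
    refine ⟨⟨q^n, k, hfn n⟩, ?_, ?_⟩
    · exact pos_add (pos_smul hx0 (pos_av k)) (pos_smul h1 hpos)
    · intro hP
      have hexp : rho cs w *ᵥ f n
          = (seqXY c n).1 • (rho cs w *ᵥ av k) + (seqXY c n).2 • (rho cs w *ᵥ β) := by
        rw [hf]
        simp only [Matrix.mulVec_add, Matrix.mulVec_smul]
      have hne : rho cs w *ᵥ f n ≠ 0 := by
        rw [hfn n, Matrix.mulVec_mulVec, ← _root_.map_mul]
        exact root_ne_zero cs ⟨w * q^n, k, rfl⟩
      apply hne
      funext m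
      have p1 : 0 ≤ (rho cs w *ᵥ f n) m := hP m
      have p2 : (rho cs w *ᵥ f n) m ≤ 0 := by
        rw [hexp]
        have hA : (rho cs w *ᵥ av k) m ≤ 0 := by
          have := hnegA m; rw [Pi.neg_apply] at this; linarith
        have hB : (rho cs w *ᵥ β) m ≤ 0 := by
          have := hnegB m; rw [Pi.neg_apply] at this; linarith
        simp only [Pi.add_apply, Pi.smul_apply, smul_eq_mul]
        nlinarith [mul_nonneg hx0 (neg_nonneg.mpr hA), mul_nonneg h1 (neg_nonneg.mpr hB)]
      show (rho cs w *ᵥ f n) m = (0:V) m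
      rw [Pi.zero_apply]
      exact le_antisymm p2 p1
  have hinj : Function.Injective f := by
    intro a b hab
    have hcf := congrFun hab m0
    simp only [hf, Pi.add_apply, Pi.smul_apply, smul_eq_mul, hm0, mul_zero, zero_add] at hcf
    have hy : (seqXY c a).2 = (seqXY c b).2 := mul_right_cancel₀ (ne_of_gt hm1) hcf
    have hmono : StrictMono (fun n => (seqXY c n).2) :=
      strictMono_nat_of_lt_succ (seq_mono hc)
    exact hmono.injective hy
  exact (Set.infinite_of_injective_forall_mem hinj hmem) (Nset_finite cs w)

theorem pos_iff (z : W) (u : Fin 3) :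
    cs.length z < cs.length (cs.simple u * z) ↔ Pos (rho cs z⁻¹ *ᵥ av u) := by
  constructor
  · intro h
    have e : z⁻¹ * cs.simple u = (cs.simple u * z)⁻¹ := by
      rw [_root_.mul_inv_rev, cs.inv_simple]
    have h' : cs.length z⁻¹ < cs.length (z⁻¹ * cs.simple u) := by
      rw [e, cs.length_inv, cs.length_inv]
      exact h
    exact pos_T1 cs z⁻¹ u h'
  · intro h
    by_contra hno
    have hlt : cs.length (cs.simple u * z) < cs.length z :=
      lt_of_le_of_ne (not_lt.mp hno) (cs.length_simple_mul_ne z u)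
    have h2 : cs.length (cs.simple u * z)
        < cs.length (cs.simple u * (cs.simple u * z)) := by
      rw [cs.simple_mul_simple_cancel_left]
      exact hlt
    have e2 : (cs.simple u * z)⁻¹ * cs.simple u
        = (cs.simple u * (cs.simple u * z))⁻¹ := by
      rw [_root_.mul_inv_rev (cs.simple u) (cs.simple u * z), cs.inv_simple]
    have h3 : cs.length ((cs.simple u * z)⁻¹)
        < cs.length ((cs.simple u * z)⁻¹ * cs.simple u) := by
      rw [e2, cs.length_inv, cs.length_inv]
      exact h2
    have h4 := pos_T1 cs (cs.simple u * z)⁻¹ u h3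
    have e3 : rho cs z⁻¹ *ᵥ av u = -(rho cs (cs.simple u * z)⁻¹ *ᵥ av u) := by
      have ez : z⁻¹ = (cs.simple u * z)⁻¹ * cs.simple u := by
        rw [_root_.mul_inv_rev, cs.inv_simple]
        simp [mul_assoc]
      rw [ez, _root_.map_mul, rho_simple, ← Matrix.mulVec_mulVec, sig_av_self,
        Matrix.mulVec_neg]
    rw [e3] at h
    have hne : rho cs (cs.simple u * z)⁻¹ *ᵥ av u ≠ 0 :=
      root_ne_zero cs ⟨(cs.simple u * z)⁻¹, u, rfl⟩
    apply hne
    funext m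
    have q1 := h m
    rw [Pi.neg_apply] at q1
    have q2 := h4 m
    show _ = (0:V) m
    rw [Pi.zero_apply]
    linarith

theorem neg_first (z : W) (r : Fin 3)
    (hz : cs.length z < cs.length (cs.simple r * z)) :
    ¬ Pos (rho cs (z⁻¹ * cs.simple r) *ᵥ av r) := by
  have hpos := (pos_iff cs z r).mp hz
  have e : rho cs (z⁻¹ * cs.simple r) *ᵥ av r = -(rho cs z⁻¹ *ᵥ av r) := by
    rw [_root_.map_mul, rho_simple, ← Matrix.mulVec_mulVec, sig_av_self, Matrix.mulVec_neg]
  rw [e]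
  intro hL
  have hne : rho cs z⁻¹ *ᵥ av r ≠ 0 := root_ne_zero cs ⟨z⁻¹, r, rfl⟩
  apply hne
  funext m
  have q1 := hL m
  rw [Pi.neg_apply] at q1
  show _ = (0:V) m
  rw [Pi.zero_apply]
  have q2 := hpos m
  linarith

theorem claimA (r s t : Fin 3) (hrs : r ≠ s) (hrt : r ≠ t) (hst : s ≠ t) (z : W)
    (hz : cs.length z < cs.length (cs.simple r * z)) :
    cs.length (cs.simple s * (cs.simple r * z)) <
      cs.length (cs.simple t * (cs.simple s * (cs.simple r * z))) := by
  rw [pos_iff]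
  have hq : rho cs (cs.simple r * (cs.simple s * (cs.simple t * cs.simple s)))
      = sig r * sig s * (sig t * sig s) := by
    simp only [_root_.map_mul, rho_simple, mul_assoc]
  have hpair := pairLemma cs r
    (cs.simple r * (cs.simple s * (cs.simple t * cs.simple s)))
    (sig s *ᵥ av t) c1
    ⟨cs.simple s, t, by rw [rho_simple]⟩ (P1pos s t hst) c1_ge
    (by rw [hq]; exact P1a r s t hrs hrt hst)
    (by rw [hq]; exact P1b r s t hrs hrt hst)
    t (av_apply_ne r t hrt) (P1coord s t hst)
  rcases hpair (z⁻¹ * cs.simple r) with hL | hR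
  · exact absurd hL (neg_first cs z r hz)
  · have e : (cs.simple s * (cs.simple r * z))⁻¹
        = z⁻¹ * cs.simple r * cs.simple s := by
      simp [_root_.mul_inv_rev, cs.inv_simple, mul_assoc]
    rw [_root_.map_mul, rho_simple, Matrix.mulVec_mulVec] at hR
    rw [e]
    simp only [_root_.map_mul, rho_simple]
    exact hR

theorem claimB (r s t : Fin 3) (hrs : r ≠ s) (hrt : r ≠ t) (hst : s ≠ t) (z : W)
    (hz : cs.length z < cs.length (cs.simple r * z)) :
    cs.length (cs.simple t * (cs.simple s * (cs.simple r * z))) <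
      cs.length (cs.simple r * (cs.simple t * (cs.simple s * (cs.simple r * z)))) := by
  rw [pos_iff]
  have hq : rho cs (cs.simple r * (cs.simple s * (cs.simple t * (cs.simple r *
        (cs.simple t * cs.simple s)))))
      = sig r * sig s * (sig t * sig r) * (sig t * sig s) := by
    simp only [_root_.map_mul, rho_simple, mul_assoc]
  have hpair := pairLemma cs r
    (cs.simple r * (cs.simple s * (cs.simple t * (cs.simple r *
      (cs.simple t * cs.simple s)))))
    ((sig s * sig t) *ᵥ av r) c2
    ⟨cs.simple s * cs.simple t, r, by rw [_root_.map_mul, rho_simple, rho_simple]⟩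
    (P2pos r s t hrs hrt hst) c2_ge
    (by rw [hq]; exact P2a r s t hrs hrt hst)
    (by rw [hq]; exact P2b r s t hrs hrt hst)
    t (av_apply_ne r t hrt) (P2coord r s t hrs hrt hst)
  rcases hpair (z⁻¹ * cs.simple r) with hL | hR
  · exact absurd hL (neg_first cs z r hz)
  · have e : (cs.simple t * (cs.simple s * (cs.simple r * z)))⁻¹
        = z⁻¹ * cs.simple r * (cs.simple s * cs.simple t) := by
      simp [_root_.mul_inv_rev, cs.inv_simple, mul_assoc]
    rw [_root_.map_mul, rho_simple, Matrix.mulVec_mulVec] at hR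
    rw [e]
    simp only [_root_.map_mul, rho_simple]
    exact hR

end Main2

end Stmt16Aux


theorem mem_wmul (v y : W) (A : Set W) : y ∈ wmul v A ↔ v⁻¹ * y ∈ A := by
  constructor
  · rintro ⟨a, ha, rfl⟩
    simpa using ha
  · intro h
    exact ⟨v⁻¹ * y, h, by simp⟩

/-- Lemma 2.18 of [BiConstruction]: if `(w, wr, wrs, wrst, wrstr)` is a minimal gallery of type
`(r,s,t,r)` in type `(4,4,4)` and `(β₁,β₂,β₃,β₄)` is the sequence of crossed roots, then
`β₁ ⊊ β₃` and `β₁ ⊊ β₄`. -/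
theorem stmt16 (cs : CoxeterSystem M444 W)
    (r s t : Fin 3) (hrs : r ≠ s) (hrt : r ≠ t) (hst : s ≠ t) (w : W)
    (hmin : cs.length (w * cs.simple r * cs.simple s * cs.simple t * cs.simple r) =
      cs.length w + 4) :
    wmul w (simpleRoot cs r) ⊂
        wmul (w * cs.simple r * cs.simple s) (simpleRoot cs t) ∧
      wmul w (simpleRoot cs r) ⊂
        wmul (w * cs.simple r * cs.simple s * cs.simple t) (simpleRoot cs r) := by
  have hsub1 : wmul w (simpleRoot cs r)
      ⊆ wmul (w * cs.simple r * cs.simple s) (simpleRoot cs t) := by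
    intro y hy
    rw [mem_wmul] at hy ⊢
    simp only [simpleRoot, Set.mem_setOf_eq] at hy ⊢
    have e : (w * cs.simple r * cs.simple s)⁻¹ * y
        = cs.simple s * (cs.simple r * (w⁻¹ * y)) := by
      simp [_root_.mul_inv_rev, cs.inv_simple, mul_assoc]
    rw [e]
    exact Stmt16Aux.claimA cs r s t hrs hrt hst (w⁻¹ * y) hy
  have hsub2 : wmul w (simpleRoot cs r)
      ⊆ wmul (w * cs.simple r * cs.simple s * cs.simple t) (simpleRoot cs r) := by
    intro y hy
    rw [mem_wmul] at hy ⊢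
    simp only [simpleRoot, Set.mem_setOf_eq] at hy ⊢
    have e : (w * cs.simple r * cs.simple s * cs.simple t)⁻¹ * y
        = cs.simple t * (cs.simple s * (cs.simple r * (w⁻¹ * y))) := by
      simp [_root_.mul_inv_rev, cs.inv_simple, mul_assoc]
    rw [e]
    exact Stmt16Aux.claimB cs r s t hrs hrt hst (w⁻¹ * y) hy
  constructor
  · rw [Set.ssubset_def]
    refine ⟨hsub1, fun hcon => ?_⟩
    have hy0 : (w * cs.simple r * cs.simple s)
        ∈ wmul (w * cs.simple r * cs.simple s) (simpleRoot cs t) := by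
      rw [mem_wmul]
      simp only [simpleRoot, Set.mem_setOf_eq]
      rw [inv_mul_cancel, mul_one]
      simp [cs.length_simple]
    have hy1 := hcon hy0
    rw [mem_wmul] at hy1
    simp only [simpleRoot, Set.mem_setOf_eq] at hy1
    have e : w⁻¹ * (w * cs.simple r * cs.simple s) = cs.simple r * cs.simple s := by
      simp [mul_assoc]
    rw [e] at hy1
    have hp := (Stmt16Aux.pos_iff cs (cs.simple r * cs.simple s) r).mp hy1
    rw [_root_.mul_inv_rev, cs.inv_simple, cs.inv_simple] at hp
    simp only [_root_.map_mul, Stmt16Aux.rho_simple] at hp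
    exact Stmt16Aux.N1 r s hrs hp
  · rw [Set.ssubset_def]
    refine ⟨hsub2, fun hcon => ?_⟩
    have hy0 : (w * cs.simple r * cs.simple s * cs.simple t)
        ∈ wmul (w * cs.simple r * cs.simple s * cs.simple t) (simpleRoot cs r) := by
      rw [mem_wmul]
      simp only [simpleRoot, Set.mem_setOf_eq]
      rw [inv_mul_cancel, mul_one]
      simp [cs.length_simple]
    have hy1 := hcon hy0
    rw [mem_wmul] at hy1
    simp only [simpleRoot, Set.mem_setOf_eq] at hy1
    have e : w⁻¹ * (w * cs.simple r * cs.simple s * cs.simple t)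
        = cs.simple r * (cs.simple s * cs.simple t) := by
      simp [mul_assoc]
    rw [e] at hy1
    have hp := (Stmt16Aux.pos_iff cs (cs.simple r * (cs.simple s * cs.simple t)) r).mp hy1
    rw [show (cs.simple r * (cs.simple s * cs.simple t))⁻¹
        = cs.simple t * (cs.simple s * cs.simple r) by
      simp [_root_.mul_inv_rev, cs.inv_simple, mul_assoc]] at hp
    simp only [_root_.map_mul, Stmt16Aux.rho_simple] at hp
    exact Stmt16Aux.N2 r s t hrs hrt hst hp
end

section
/- Let X be a finite set and let R be a set of elements of the free group F(X) on X. If the presented group ⟨X | R⟩ (the quotient of F(X) by the normal closure of R) is finitely presented, then there exists a finite subset F ⊆ R such that the normal closure of F in F(X) equals the normal closure of R; in particular ⟨X | F⟩ = ⟨X | R⟩. -/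
/-- A group is finitely presented if it is isomorphic to `⟨Y | E⟩` for some finite set of
generators `Y` and finite set of relators `E`. -/
def IsFinitelyPresentedGroup (G : Type) [Group G] : Prop :=
  ∃ (Y : Type) (_ : Finite Y) (E : Set (FreeGroup Y)),
    E.Finite ∧ Nonempty (G ≃* PresentedGroup E)

private lemma map_normalClosure_le' {G H : Type*} [Group G] [Group H] (f : G →* H)
    (s : Set G) : (Subgroup.normalClosure s).map f ≤ Subgroup.normalClosure (f '' s) := by
  rw [Subgroup.map_le_iff_le_comap]
  haveI : ((Subgroup.normalClosure (f '' s)).comap f).Normal :=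
    Subgroup.Normal.comap inferInstance f
  exact Subgroup.normalClosure_le_normal fun x hx =>
    Subgroup.subset_normalClosure ⟨x, hx, rfl⟩

private lemma mem_normalClosure_finite {G : Type*} [Group G] (R : Set G) {x : G}
    (hx : x ∈ Subgroup.normalClosure R) :
    ∃ T ⊆ R, T.Finite ∧ x ∈ Subgroup.normalClosure T := by
  refine Subgroup.closure_induction (fun y hy => ?_) ?_ ?_ ?_ hx
  · obtain ⟨a, ha, hconj⟩ := Group.mem_conjugatesOfSet_iff.mp hy
    refine ⟨{a}, Set.singleton_subset_iff.mpr ha, Set.finite_singleton a, ?_⟩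
    exact Subgroup.conjugatesOfSet_subset_normalClosure
      (Group.mem_conjugatesOfSet_iff.mpr ⟨a, rfl, hconj⟩)
  · exact ⟨∅, Set.empty_subset R, Set.finite_empty, Subgroup.one_mem _⟩
  · rintro a b _ _ ⟨T, hTR, hTf, haT⟩ ⟨U, hUR, hUf, hbU⟩
    refine ⟨T ∪ U, Set.union_subset hTR hUR, hTf.union hUf, Subgroup.mul_mem _ ?_ ?_⟩
    · exact Subgroup.normalClosure_mono Set.subset_union_left haT
    · exact Subgroup.normalClosure_mono Set.subset_union_right hbU
  · rintro a _ ⟨T, hTR, hTf, haT⟩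
    exact ⟨T, hTR, hTf, Subgroup.inv_mem _ haT⟩

/-- If `X` is finite and the presented group `⟨X | R⟩` is finitely presented, then some finite
subset `F ⊆ R` has the same normal closure as `R` (so `⟨X | F⟩ = ⟨X | R⟩`). -/
theorem stmt18 (X : Type) [Finite X] (R : Set (FreeGroup X))
    (h : IsFinitelyPresentedGroup (PresentedGroup R)) :
    ∃ F ⊆ R, F.Finite ∧
      Subgroup.normalClosure F = Subgroup.normalClosure R := by
  obtain ⟨Y, hY, E, hEfin, ⟨e⟩⟩ := h
  -- the two presentation maps
  set φ : FreeGroup X →* PresentedGroup R :=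
    QuotientGroup.mk' (Subgroup.normalClosure R) with hφ
  have hφsurj : Function.Surjective φ := QuotientGroup.mk'_surjective _
  set ψ : FreeGroup Y →* PresentedGroup R :=
    (e.symm.toMonoidHom.comp (QuotientGroup.mk' (Subgroup.normalClosure E))) with hψ
  have hψsurj : Function.Surjective ψ :=
    e.symm.surjective.comp (QuotientGroup.mk'_surjective _)
  have hkerφ : φ.ker = Subgroup.normalClosure R := QuotientGroup.ker_mk' _
  have hkerψ : ψ.ker = Subgroup.normalClosure E := by
    ext x
    simp only [hψ, MonoidHom.mem_ker, MonoidHom.comp_apply, MulEquiv.coe_toMonoidHom]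
    change e.symm (PresentedGroup.mk E x) = 1 ↔ _
    rw [map_eq_one_iff _ e.symm.injective]
    exact QuotientGroup.eq_one_iff x
  -- lifts between the free groups
  choose αf hαf using fun y : Y => hφsurj (ψ (FreeGroup.of y))
  choose βf hβf using fun x : X => hψsurj (φ (FreeGroup.of x))
  set α : FreeGroup Y →* FreeGroup X := FreeGroup.lift αf with hα
  set β : FreeGroup X →* FreeGroup Y := FreeGroup.lift βf with hβ
  have hφα : φ.comp α = ψ := FreeGroup.ext_hom _ _ fun y => by
    simp [hα, hαf y]
  have hψβ : ψ.comp β = φ := FreeGroup.ext_hom _ _ fun x => by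
    simp [hβ, hβf x]
  -- the finite normal generating set S
  set S : Set (FreeGroup X) :=
    (α '' E) ∪ (Set.range fun x : X => (FreeGroup.of x)⁻¹ * α (β (FreeGroup.of x))) with hS
  have hSfin : S.Finite := (hEfin.image α).union (Set.finite_range _)
  have hSsub : S ⊆ ↑(Subgroup.normalClosure R) := by
    rintro s (⟨w, hw, rfl⟩ | ⟨x, rfl⟩)
    · rw [SetLike.mem_coe, ← hkerφ, MonoidHom.mem_ker, ← MonoidHom.comp_apply, hφα,
        ← MonoidHom.mem_ker, hkerψ]
      exact Subgroup.subset_normalClosure hw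
    · rw [SetLike.mem_coe, ← hkerφ, MonoidHom.mem_ker]
      have hx : φ (α (β (FreeGroup.of x))) = φ (FreeGroup.of x) := by
        rw [← MonoidHom.comp_apply, hφα, ← MonoidHom.comp_apply, hψβ]
      simp only [map_mul, map_inv, hx, inv_mul_cancel]
  have hNS : Subgroup.normalClosure S = Subgroup.normalClosure R := by
    apply le_antisymm
    · exact Subgroup.normalClosure_le_normal hSsub
    · -- show every element of ker φ lies in normalClosure S
      rw [← hkerφ]
      intro w hw
      set q : FreeGroup X →* FreeGroup X ⧸ Subgroup.normalClosure S :=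
        QuotientGroup.mk' (Subgroup.normalClosure S) with hq
      have hagree : q.comp (α.comp β) = q := by
        refine FreeGroup.ext_hom _ _ fun x => ?_
        have hmem : (FreeGroup.of x)⁻¹ * α (β (FreeGroup.of x)) ∈
            Subgroup.normalClosure S :=
          Subgroup.subset_normalClosure (Or.inr ⟨x, rfl⟩)
        have := (QuotientGroup.eq (s := Subgroup.normalClosure S)).mpr hmem
        simpa [hq] using this.symm
      have hβw : β w ∈ Subgroup.normalClosure E := by
        rw [← hkerψ, MonoidHom.mem_ker, ← MonoidHom.comp_apply, hψβ,
          ← MonoidHom.mem_ker]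
        exact hw
      have hαβw : α (β w) ∈ Subgroup.normalClosure S := by
        have h1 : α (β w) ∈ (Subgroup.normalClosure E).map α :=
          Subgroup.mem_map_of_mem α hβw
        have h2 := map_normalClosure_le' α E h1
        exact Subgroup.normalClosure_mono Set.subset_union_left h2
      have hqw : q w = 1 := by
        have h3 := congrArg (fun f : FreeGroup X →* _ => f w) hagree
        simp only [MonoidHom.comp_apply] at h3
        rw [← h3]
        exact (QuotientGroup.eq_one_iff _).mpr hαβw
      exact (QuotientGroup.eq_one_iff w).mp hqw
  -- now shrink S to a finite subset F of R
  have hmem : ∀ s ∈ S, ∃ T ⊆ R, T.Finite ∧ s ∈ Subgroup.normalClosure T := fun s hs =>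
    mem_normalClosure_finite R (hSsub hs)
  choose! T hTR hTfin hTmem using hmem
  refine ⟨⋃ s ∈ S, T s, Set.iUnion₂_subset hTR, hSfin.biUnion fun s hs => hTfin s hs, ?_⟩
  apply le_antisymm
  · exact Subgroup.normalClosure_le_normal
      ((Set.iUnion₂_subset hTR).trans Subgroup.subset_normalClosure)
  · rw [← hNS]
    refine Subgroup.normalClosure_le_normal fun s hs => ?_
    exact Subgroup.normalClosure_mono
      (Set.subset_iUnion₂_of_subset s hs subset_rfl) (hTmem s hs)
end
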